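/- For any topological space X and any point p ∈ X, if p has a local π-base of cardinality at most κ (κ an infinite cardinal), then p has a centered local π-base of cardinality at most 2^κ. Consequently πχc(X) ≤ 2^{πχ(X)}. -/

import Mathlib

open Set Topology Cardinal

universe u

/-- A local π-base at `p`: a family of nonempty open sets such that every open
set containing `p` contains a member of the family. -/
def IsLocalPiBase {X : Type u} [TopologicalSpace X] (p : X) (𝓑 : Set (Set X)) : Prop :=
  (∀ b ∈ 𝓑, IsOpen b ∧ b.Nonempty) ∧
  ∀ U : Set X, IsOpen U → p ∈ U → ∃ b ∈ 𝓑, b ⊆ U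

/-- A family of sets is centered if it has the finite intersection property. -/
def Centered {X : Type u} (𝓑 : Set (Set X)) : Prop :=
  ∀ F : Finset (Set X), F.Nonempty → ↑F ⊆ 𝓑 → (⋂₀ (F : Set (Set X))).Nonempty

/-- A family of sets is linked if any two members meet. -/
def Linked {X : Type u} (𝓑 : Set (Set X)) : Prop :=
  ∀ b₁ ∈ 𝓑, ∀ b₂ ∈ 𝓑, (b₁ ∩ b₂).Nonempty

/-- A decreasing local π-base at `p`, given as a ⊆-decreasing sequence of
nonempty open sets. -/
def IsDecreasingLocalPiBase {X : Type u} [TopologicalSpace X] (p : X) (A : ℕ → Set X) : Prop :=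
  (∀ n, IsOpen (A n) ∧ (A n).Nonempty) ∧
  (∀ n, A (n + 1) ⊆ A n) ∧
  ∀ U : Set X, IsOpen U → p ∈ U → ∃ n, A n ⊆ U

/-- A cellular family: pairwise disjoint nonempty open sets. -/
def IsCellular {X : Type u} [TopologicalSpace X] (𝓒 : Set (Set X)) : Prop :=
  (∀ c ∈ 𝓒, IsOpen c ∧ c.Nonempty) ∧ 𝓒.PairwiseDisjoint id

/-- A weak closed pseudobase at `p`: a family of open sets whose closures
intersect exactly in `{p}`. -/
def IsWeakClosedPseudobase {X : Type u} [TopologicalSpace X] (p : X) (𝓑 : Set (Set X)) : Prop :=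
  (∀ b ∈ 𝓑, IsOpen b) ∧ (⋂ b ∈ 𝓑, closure b) = {p}

/-- A neighborhood base at `p` consisting of open sets containing `p`. -/
def IsNhdBase {X : Type u} [TopologicalSpace X] (p : X) (𝓑 : Set (Set X)) : Prop :=
  (∀ b ∈ 𝓑, IsOpen b ∧ p ∈ b) ∧
  ∀ U : Set X, IsOpen U → p ∈ U → ∃ b ∈ 𝓑, b ⊆ U

/-- if `p` has a local π-base of cardinality at most `κ`, then it has
a centered local π-base of cardinality at most `2 ^ κ`; i.e. πχc(X) ≤ 2^{πχ(X)}. -/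
theorem centered_localPiBase_le_two_pow
    {X : Type u} [TopologicalSpace X] (p : X) (κ : Cardinal.{u}) (hκ : ℵ₀ ≤ κ)
    (h : ∃ 𝓑 : Set (Set X), IsLocalPiBase p 𝓑 ∧ #𝓑 ≤ κ) :
    ∃ 𝓒 : Set (Set X), IsLocalPiBase p 𝓒 ∧ Centered 𝓒 ∧ #𝓒 ≤ 2 ^ κ := by
  classical
  obtain ⟨𝓑, ⟨hopen, hbase⟩, hcard⟩ := h
  set B : Set X → Set (Set X) := fun U => {b | b ∈ 𝓑 ∧ b ⊆ U} with hBdef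
  set S : Set (Set (Set X)) := {s | ∃ U, IsOpen U ∧ p ∈ U ∧ s = B U} with hSdef
  have hBne : ∀ U, IsOpen U → p ∈ U → (B U).Nonempty := by
    intro U hU hpU
    obtain ⟨b, hb, hbU⟩ := hbase U hU hpU
    exact ⟨b, hb, hbU⟩
  -- finite intersections of elements of S contain some B V
  have key : ∀ t : Set (Set (Set X)), t.Finite → t ⊆ S →
      ∃ V, IsOpen V ∧ p ∈ V ∧ B V ⊆ ⋂₀ t := by
    intro t htf
    refine Set.Finite.induction_on (motive := fun t _ => t ⊆ S → ∃ V, IsOpen V ∧ p ∈ V ∧ B V ⊆ ⋂₀ t) t htf ?_ ?_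
    · intro _
      exact ⟨Set.univ, isOpen_univ, Set.mem_univ p, by simp⟩
    · intro a s ha hsf ih hsub
      obtain ⟨V, hV, hpV, hVsub⟩ := ih (fun x hx => hsub (Set.mem_insert_of_mem _ hx))
      obtain ⟨U, hU, hpU, rfl⟩ := hsub (Set.mem_insert a s)
      refine ⟨V ∩ U, hV.inter hU, ⟨hpV, hpU⟩, ?_⟩
      intro b hb
      rw [Set.sInter_insert]
      exact ⟨⟨hb.1, fun x hx => (hb.2 hx).2⟩,
        hVsub ⟨hb.1, fun x hx => (hb.2 hx).1⟩⟩
  have hNeBot : (Filter.generate S).NeBot := by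
    rw [Filter.generate_neBot_iff]
    intro t hts htf
    obtain ⟨V, hV, hpV, hVsub⟩ := key t htf hts
    obtain ⟨b, hb⟩ := hBne V hV hpV
    exact ⟨b, hVsub hb⟩
  set 𝒰 : Ultrafilter (Set X) := @Ultrafilter.of _ _ hNeBot with h𝒰
  have h𝒰le : (𝒰 : Filter (Set X)) ≤ Filter.generate S := @Ultrafilter.of_le _ _ hNeBot
  have hBmem : ∀ U, IsOpen U → p ∈ U → B U ∈ 𝒰 := by
    intro U hU hpU
    exact h𝒰le (Filter.mem_generate_of_mem ⟨U, hU, hpU, rfl⟩)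
  refine ⟨(fun s : Set (Set X) => ⋃₀ s) '' {s | s ∈ 𝒰 ∧ s ⊆ 𝓑}, ⟨?_, ?_⟩, ?_, ?_⟩
  · rintro c ⟨s, ⟨hs𝒰, hs𝓑⟩, rfl⟩
    constructor
    · exact isOpen_sUnion fun b hb => (hopen b (hs𝓑 hb)).1
    · obtain ⟨b, hb⟩ := Ultrafilter.nonempty_of_mem hs𝒰
      obtain ⟨x, hx⟩ := (hopen b (hs𝓑 hb)).2
      exact ⟨x, b, hb, hx⟩
  · intro U hU hpU
    refine ⟨⋃₀ B U, ⟨B U, ⟨hBmem U hU hpU, fun b hb => hb.1⟩, rfl⟩, ?_⟩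
    rintro x ⟨b, hb, hx⟩
    exact hb.2 hx
  · intro F hFne hFsub
    have hg : ∀ c : Set X, ∃ s : Set (Set X),
        c ∈ (fun s : Set (Set X) => ⋃₀ s) '' {s | s ∈ 𝒰 ∧ s ⊆ 𝓑} → s ∈ 𝒰 ∧ s ⊆ 𝓑 ∧ ⋃₀ s = c := by
      intro c
      by_cases hc : c ∈ (fun s : Set (Set X) => ⋃₀ s) '' {s | s ∈ 𝒰 ∧ s ⊆ 𝓑}
      · obtain ⟨s, ⟨hs1, hs2⟩, hs3⟩ := hc
        exact ⟨s, fun _ => ⟨hs1, hs2, hs3⟩⟩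
      · exact ⟨∅, fun h => absurd h hc⟩
    choose g hgspec using hg
    have hT : (⋂ c ∈ (F : Set (Set X)), g c) ∈ 𝒰 := by
      exact (Filter.biInter_mem F.finite_toSet).mpr fun c hc => (hgspec c (hFsub hc)).1
    obtain ⟨b, hb⟩ := Ultrafilter.nonempty_of_mem hT
    obtain ⟨c₀, hc₀⟩ := hFne
    have hb' : ∀ c ∈ F, b ∈ g c := by
      intro c hc
      exact Set.mem_iInter₂.mp hb c hc
    have hb𝓑 : b ∈ 𝓑 := (hgspec c₀ (hFsub hc₀)).2.1 (hb' c₀ hc₀)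
    obtain ⟨x, hx⟩ := (hopen b hb𝓑).2
    refine ⟨x, ?_⟩
    rintro c hc
    rw [← (hgspec c (hFsub hc)).2.2]
    exact ⟨b, hb' c hc, hx⟩
  · calc #((fun s : Set (Set X) => ⋃₀ s) '' {s | s ∈ 𝒰 ∧ s ⊆ 𝓑})
        ≤ #{s | s ∈ 𝒰 ∧ s ⊆ 𝓑} := Cardinal.mk_image_le
      _ ≤ #(𝒫 𝓑) := Cardinal.mk_le_mk_of_subset (fun s hs => hs.2)
      _ = 2 ^ #𝓑 := Cardinal.mk_powerset 𝓑
      _ ≤ 2 ^ κ := Cardinal.power_le_power_left two_ne_zero hcard
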